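/- Let G = G(a,1,n) with a > 1 be the group of n×n monomial matrices whose nonzero entries are a-th roots of unity. For 0 ≤ r ≤ n, the number of elements g ∈ G with dim im(g − 1) = r (in the natural n-dimensional representation) equals ∑_{j=0}^{r} C(n−r+j, j) · a^{r−j} · (a−1)^j · c(n, n−r+j), where c(n,k) is the unsigned Stirling number of the first kind. -/

import Mathlib

/-- The number of cycles of a permutation (fixed points count as 1-cycles). -/
def cyclesCount {n : ℕ} (σ : Equiv.Perm (Fin n)) : ℕ :=
  σ.cycleType.card + (Finset.univ.filter fun x => σ x = x).card

/-- The unsigned Stirling number of the first kind `c(n,k)`. -/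
def stirC (n k : ℕ) : ℕ :=
  (Finset.univ.filter fun σ : Equiv.Perm (Fin n) => cyclesCount σ = k).card

/-- The monomial matrix of `G(a,1,n)` with underlying permutation `σ` and with the
nonzero entry in column `j` equal to the `a`-th root of unity `ζ^{f j}`,
`ζ = exp(2πi/a)`. Every element of `G(a,1,n)` arises exactly once this way. -/
noncomputable def gmat (a n : ℕ) (f : Fin n → ZMod a) (σ : Equiv.Perm (Fin n)) :
    Matrix (Fin n) (Fin n) ℂ := fun i j =>
  if σ j = i then Complex.exp (2 * Real.pi * Complex.I * (f j).val / a) else 0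


set_option linter.unusedSectionVars false
set_option maxHeartbeats 1000000

open Equiv Equiv.Perm Finset Complex

section Zeta

noncomputable def zu (a : ℕ) (u : ZMod a) : ℂ :=
  Complex.exp (2 * Real.pi * Complex.I * u.val / a)

lemma exp_mod (a : ℕ) (ha : a ≠ 0) (m : ℕ) :
    Complex.exp (2 * Real.pi * Complex.I * ((m % a : ℕ) : ℂ) / a)
      = Complex.exp (2 * Real.pi * Complex.I * (m : ℂ) / a) := by
  conv_rhs => rw [← Nat.div_add_mod m a]
  have haC : (a : ℂ) ≠ 0 := Nat.cast_ne_zero.mpr ha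
  push_cast
  rw [show 2 * (Real.pi:ℂ) * Complex.I * ((a : ℂ) * (m / a : ℕ) + ((m % a : ℕ):ℂ)) / a
      = ((m / a : ℕ) : ℂ) * (2 * Real.pi * Complex.I) + 2 * Real.pi * Complex.I * ((m % a : ℕ):ℂ) / a by
    field_simp]
  rw [Complex.exp_add, Complex.exp_nat_mul, Complex.exp_two_pi_mul_I, one_pow, one_mul]

lemma exp_eq_one_nat (a m : ℕ) (ha : a ≠ 0) (hm : m < a)
    (h : Complex.exp (2 * Real.pi * Complex.I * (m : ℂ) / a) = 1) : m = 0 := by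
  rw [Complex.exp_eq_one_iff] at h
  obtain ⟨k, hk⟩ := h
  have haC : (a : ℂ) ≠ 0 := Nat.cast_ne_zero.mpr ha
  have h2pi : (2 * (Real.pi:ℂ) * Complex.I) ≠ 0 := by
    simp [Real.pi_ne_zero, Complex.I_ne_zero]
  have h2 : (2 * (Real.pi:ℂ) * Complex.I) * (m : ℂ)
      = (2 * (Real.pi:ℂ) * Complex.I) * ((k : ℂ) * a) := by
    have := hk
    field_simp at this
    linear_combination (2 * (Real.pi:ℂ) * Complex.I) * this
  have h3 : (m : ℂ) = (k : ℂ) * a := mul_left_cancel₀ h2pi h2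
  have h4 : (m : ℤ) = k * a := by exact_mod_cast h3
  have ha1 : (1:ℤ) ≤ a := by exact_mod_cast Nat.one_le_iff_ne_zero.mpr ha
  have hma : (m:ℤ) < a := by exact_mod_cast hm
  have hk0 : k = 0 := by nlinarith
  rw [hk0] at h4; simpa using h4

lemma zu_zero (a : ℕ) [NeZero a] : zu a 0 = 1 := by simp [zu]

lemma zu_ne_zero (a : ℕ) (u : ZMod a) : zu a u ≠ 0 := Complex.exp_ne_zero _

lemma zu_add (a : ℕ) [NeZero a] (u v : ZMod a) : zu a (u + v) = zu a u * zu a v := by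
  unfold zu
  rw [← Complex.exp_add, ZMod.val_add, exp_mod a (NeZero.ne a)]
  congr 1
  have haC : (a : ℂ) ≠ 0 := Nat.cast_ne_zero.mpr (NeZero.ne a)
  push_cast
  field_simp

lemma zu_eq_one_iff (a : ℕ) [NeZero a] (u : ZMod a) : zu a u = 1 ↔ u = 0 := by
  constructor
  · intro h
    have := exp_eq_one_nat a u.val (NeZero.ne a) (ZMod.val_lt u) h
    exact (ZMod.val_eq_zero u).mp this
  · intro h; rw [h]; exact zu_zero a

lemma zu_inj (a : ℕ) [NeZero a] {u v : ZMod a} (h : zu a u = zu a v) : u = v := by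
  have h1 : zu a (u - v) * zu a v = zu a u := by rw [← zu_add]; ring_nf
  rw [h] at h1
  have h2 : zu a (u - v) = 1 :=
    mul_right_cancel₀ (zu_ne_zero a v) (by rw [h1, one_mul])
  have := (zu_eq_one_iff a _).mp h2
  linear_combination this

end Zeta

section Orbits

variable {n : ℕ}

def sc (σ : Perm (Fin n)) : Setoid (Fin n) :=
  ⟨σ.SameCycle, ⟨SameCycle.refl σ, fun h => h.symm, fun h h' => h.trans h'⟩⟩

instance scDec (σ : Perm (Fin n)) : DecidableRel (sc σ).r :=
  fun x y => inferInstanceAs (Decidable (σ.SameCycle x y))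

instance orbFintype (σ : Perm (Fin n)) : Fintype (Quotient (sc σ)) :=
  @Quotient.fintype _ _ (sc σ) (scDec σ)

instance orbDecEq (σ : Perm (Fin n)) : DecidableEq (Quotient (sc σ)) :=
  @Quotient.decidableEq _ (sc σ) (scDec σ)

/-- the orbit sum of decorations -/
def orbSum {a : ℕ} (f : Fin n → ZMod a) (σ : Perm (Fin n)) (o : Quotient (sc σ)) : ZMod a :=
  ∑ x ∈ univ.filter (fun x => Quotient.mk (sc σ) x = o), f x

/-- number of zero-sum orbits -/
def zc {a : ℕ} (f : Fin n → ZMod a) (σ : Perm (Fin n)) : ℕ :=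
  (univ.filter fun o : Quotient (sc σ) => orbSum f σ o = 0).card

lemma mk_eq_mk_iff {σ : Perm (Fin n)} {x y : Fin n} :
    Quotient.mk (sc σ) x = Quotient.mk (sc σ) y ↔ σ.SameCycle x y :=
  ⟨fun h => Quotient.exact h, fun h => Quotient.sound h⟩

lemma mk_apply {σ : Perm (Fin n)} (x : Fin n) :
    Quotient.mk (sc σ) (σ x) = Quotient.mk (sc σ) x :=
  Quotient.sound (⟨-1, by simp⟩ : σ.SameCycle (σ x) x)

lemma mk_out {σ : Perm (Fin n)} (o : Quotient (sc σ)) :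
    Quotient.mk (sc σ) o.out = o := Quotient.out_eq o

lemma mk_pow {σ : Perm (Fin n)} (x : Fin n) (i : ℕ) :
    Quotient.mk (sc σ) ((σ ^ i) x) = Quotient.mk (sc σ) x := by
  induction i with
  | zero => simp
  | succ i ih => rw [pow_succ', Perm.mul_apply, mk_apply, ih]

lemma sameCycle_out {σ : Perm (Fin n)} (x : Fin n) :
    σ.SameCycle (Quotient.mk (sc σ) x).out x :=
  Quotient.exact (mk_out (Quotient.mk (sc σ) x))

/-- card of orbits = cyclesCount -/
theorem card_orb (σ : Perm (Fin n)) :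
    Fintype.card (Quotient (sc σ)) =
      σ.cycleType.card + (univ.filter fun x => σ x = x).card := by
  classical
  have key : Fintype.card (Quotient (sc σ)) =
      Fintype.card ({c // c ∈ σ.cycleFactorsFinset} ⊕ {x : Fin n // σ x = x}) := by
    apply Fintype.card_congr
    apply Equiv.ofBijective (f := fun o : Quotient (sc σ) =>
      if h : σ o.out = o.out then Sum.inr ⟨o.out, h⟩
      else Sum.inl ⟨σ.cycleOf o.out, cycleOf_mem_cycleFactorsFinset_iff.mpr (mem_support.mpr h)⟩)
    constructor
    · intro o₁ o₂ he
      by_cases h1 : σ o₁.out = o₁.out <;> by_cases h2 : σ o₂.out = o₂.out <;>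
        simp [h1, h2] at he
      · -- both fixed
        rw [← mk_out o₁, ← mk_out o₂, he]
      · -- both moved : cycleOf equal
        have : o₂.out ∈ (σ.cycleOf o₁.out).support := by
          rw [he, mem_support_cycleOf_iff]
          exact ⟨SameCycle.refl _ _, mem_support.mpr h2⟩
        rw [mem_support_cycleOf_iff] at this
        rw [← mk_out o₁, ← mk_out o₂, mk_eq_mk_iff.mpr this.1]
    · rintro (⟨c, hc⟩ | ⟨x, hx⟩)
      · obtain ⟨hcyc, hsupp⟩ := mem_cycleFactorsFinset_iff.mp hc
        obtain ⟨x, hxc⟩ := hcyc.nonempty_support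
        have hcx : c = σ.cycleOf x := cycle_is_cycleOf hxc hc
        have hmoved : σ x ≠ x := by
          have := mem_support.mp hxc
          rwa [hsupp x hxc] at this
        refine ⟨Quotient.mk (sc σ) x, ?_⟩
        have hsame : σ.SameCycle (Quotient.mk (sc σ) x).out x := sameCycle_out x
        have hmoved' : σ (Quotient.mk (sc σ) x).out ≠ (Quotient.mk (sc σ) x).out := by
          intro hcon
          exact hmoved ((hsame.apply_eq_self_iff).mp hcon)
        dsimp only
        rw [dif_neg hmoved']
        congr 1
        apply Subtype.ext
        show σ.cycleOf (Quotient.mk (sc σ) x).out = c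
        rw [hcx]
        exact hsame.cycleOf_eq
      · refine ⟨Quotient.mk (sc σ) x, ?_⟩
        have hout : (Quotient.mk (sc σ) x).out = x := by
          have hsame : σ.SameCycle x (Quotient.mk (sc σ) x).out := (sameCycle_out x).symm
          obtain ⟨i, hi⟩ := hsame
          rw [← hi, zpow_apply_eq_self_of_apply_eq_self hx]
        dsimp only
        rw [dif_pos (by rw [hout]; exact hx)]
        congr 1
        exact Subtype.ext hout
  rw [key, Fintype.card_sum, Fintype.card_coe, Fintype.card_subtype]
  congr 1
  rw [Equiv.Perm.cycleType_def, Multiset.card_map]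
  rfl

/-- functions with exactly `m` zeros -/
lemma count_exact_zeros {ι : Type*} [Fintype ι] [DecidableEq ι] (a m : ℕ) [NeZero a] :
    (univ.filter fun s : ι → ZMod a => (univ.filter fun i => s i = 0).card = m).card
      = (Fintype.card ι).choose m * (a - 1) ^ (Fintype.card ι - m) := by
  classical
  rw [Finset.card_eq_sum_card_fiberwise
    (f := fun s : ι → ZMod a => univ.filter fun i => s i = 0)
    (t := Finset.powersetCard m univ)
    (by
      intro s hs
      simp only [Finset.mem_coe, mem_filter, mem_univ, true_and] at hs
      rw [Finset.mem_coe, Finset.mem_powersetCard]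
      exact ⟨Finset.subset_univ _, hs⟩)]
  have hfib : ∀ A ∈ Finset.powersetCard m (univ : Finset ι),
      ((univ.filter fun s : ι → ZMod a => (univ.filter fun i => s i = 0).card = m).filter
        fun s => (univ.filter fun i => s i = 0) = A).card = (a - 1) ^ (Fintype.card ι - m) := by
    intro A hA
    rw [Finset.mem_powersetCard] at hA
    have h1 : ((univ.filter fun s : ι → ZMod a => (univ.filter fun i => s i = 0).card = m).filter
        fun s => (univ.filter fun i => s i = 0) = A)
        = univ.filter fun s : ι → ZMod a => (univ.filter fun i => s i = 0) = A := by
      rw [Finset.filter_filter]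
      apply Finset.filter_congr
      intro s _
      simp only [and_iff_right_iff_imp]
      intro h
      rw [h, hA.2]
    rw [h1]
    -- count functions whose zero set is exactly A
    have h2 : (univ.filter fun s : ι → ZMod a => (univ.filter fun i => s i = 0) = A).card
        = Fintype.card {s : ι → ZMod a // ∀ i, s i = 0 ↔ i ∈ A} := by
      rw [Fintype.card_subtype]
      congr 1
      apply Finset.filter_congr
      intro s _
      constructor
      · intro h i
        rw [← h]
        simp
      · intro h
        ext i
        simp [h i]
    rw [h2]
    have e : {s : ι → ZMod a // ∀ i, s i = 0 ↔ i ∈ A} ≃ ({i : ι // i ∉ A} → {u : ZMod a // u ≠ 0}) :=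
      { toFun := fun s i => ⟨s.1 i.1, fun hc => i.2 ((s.2 i.1).mp hc)⟩
        invFun := fun c => ⟨fun i => if h : i ∈ A then 0 else (c ⟨i, h⟩).1, by
          intro i
          by_cases h : i ∈ A <;> simp [h]
          exact (c ⟨i, h⟩).2⟩
        left_inv := fun s => by
          apply Subtype.ext
          funext i
          by_cases h : i ∈ A <;> simp [h]
          exact ((s.2 i).mpr h).symm
        right_inv := fun c => by
          funext i
          apply Subtype.ext
          simp [i.2] }
    rw [Fintype.card_congr e, Fintype.card_fun]
    have hbase : Fintype.card {u : ZMod a // u ≠ 0} = a - 1 := by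
      have h := Fintype.card_subtype_compl (fun u : ZMod a => u = 0)
      rw [Fintype.card_subtype_eq, ZMod.card] at h
      exact h
    have hexp : Fintype.card {i : ι // i ∉ A} = Fintype.card ι - m := by
      have h := Fintype.card_subtype_compl (fun i : ι => i ∈ A)
      have h2 : Fintype.card {i : ι // i ∈ A} = A.card := Fintype.card_coe A
      rw [h2, hA.2] at h
      exact h
    rw [hbase, hexp]
  rw [Finset.sum_congr rfl hfib, Finset.sum_const, Finset.card_powersetCard, card_univ,
    smul_eq_mul]


section RankSetup

variable (σ : Perm (Fin n))

lemma exists_pow_out (x : Fin n) :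
    ∃ k : ℕ, (σ ^ k) (Quotient.mk (sc σ) x).out = x := by
  obtain ⟨i, _, hi⟩ := (sameCycle_out x).exists_pow_eq'
  exact ⟨i, hi⟩

/-- minimal nonneg exponent taking the orbit representative to `x` -/
noncomputable def kk (x : Fin n) : ℕ := Nat.find (exists_pow_out σ x)

lemma kk_spec (x : Fin n) : (σ ^ kk σ x) (Quotient.mk (sc σ) x).out = x :=
  Nat.find_spec (exists_pow_out σ x)

lemma kk_min {x : Fin n} {m : ℕ} (hm : m < kk σ x) :
    (σ ^ m) (Quotient.mk (sc σ) x).out ≠ x :=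
  Nat.find_min (exists_pow_out σ x) hm

lemma exists_per (o : Quotient (sc σ)) :
    ∃ m : ℕ, 0 < m ∧ (σ ^ m) o.out = o.out :=
  ⟨orderOf σ, orderOf_pos σ, by rw [pow_orderOf_eq_one]; rfl⟩

/-- the length of the cycle through the representative of `o` -/
noncomputable def per (o : Quotient (sc σ)) : ℕ := Nat.find (exists_per σ o)

lemma per_pos (o : Quotient (sc σ)) : 0 < per σ o := (Nat.find_spec (exists_per σ o)).1

lemma per_spec (o : Quotient (sc σ)) : (σ ^ per σ o) o.out = o.out :=
  (Nat.find_spec (exists_per σ o)).2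

lemma pow_per_mul (o : Quotient (sc σ)) (q : ℕ) : (σ ^ (per σ o * q)) o.out = o.out := by
  induction q with
  | zero => simp
  | succ q ih =>
      rw [Nat.mul_succ, pow_add, Perm.mul_apply, per_spec, ih]

lemma pow_mod_per (o : Quotient (sc σ)) (m : ℕ) :
    (σ ^ (m % per σ o)) o.out = (σ ^ m) o.out := by
  conv_rhs => rw [← Nat.div_add_mod m (per σ o)]
  rw [add_comm, pow_add, Perm.mul_apply, pow_per_mul]

lemma kk_lt_per (x : Fin n) : kk σ x < per σ (Quotient.mk (sc σ) x) := by
  by_contra h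
  push_neg at h
  set o := Quotient.mk (sc σ) x
  have h1 : (σ ^ (kk σ x % per σ o)) o.out = x := by
    rw [pow_mod_per]; exact kk_spec σ x
  have h2 : kk σ x % per σ o < kk σ x :=
    lt_of_lt_of_le (Nat.mod_lt _ (per_pos σ o)) h
  exact kk_min σ h2 h1

lemma pow_out_inj (o : Quotient (sc σ)) {i j : ℕ} (hi : i < per σ o) (hj : j < per σ o)
    (h : (σ ^ i) o.out = (σ ^ j) o.out) : i = j := by
  wlog hij : i ≤ j generalizing i j
  · exact (this hj hi h.symm (le_of_not_ge hij)).symm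
  by_contra hne
  have hd : 0 < j - i := by omega
  have : (σ ^ i) ((σ ^ (j - i)) o.out) = (σ ^ i) o.out := by
    rw [← Perm.mul_apply, ← pow_add]
    rw [show i + (j - i) = j by omega]
    exact h.symm
  have h2 : (σ ^ (j - i)) o.out = o.out := (σ ^ i).injective this
  have := Nat.find_min (exists_per σ o) (show j - i < per σ o by omega) ⟨hd, h2⟩
  exact this

lemma sum_per_eq_orbSum {a : ℕ} (f : Fin n → ZMod a) (o : Quotient (sc σ)) :
    ∑ i ∈ range (per σ o), f ((σ ^ i) o.out) = orbSum f σ o := by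
  unfold orbSum
  apply Finset.sum_nbij' (i := fun i => (σ ^ i) o.out)
    (j := fun y => kk σ y)
  · intro i hi
    simp only [mem_filter, mem_univ, true_and]
    rw [mk_pow, mk_out]
  · intro y hy
    simp only [mem_filter, mem_univ, true_and] at hy
    rw [mem_range]
    calc kk σ y < per σ (Quotient.mk (sc σ) y) := kk_lt_per σ y
      _ = per σ o := by rw [hy]
  · intro i hi
    rw [mem_range] at hi
    -- kk σ ((σ^i) o.out) = i
    have hmk : Quotient.mk (sc σ) ((σ ^ i) o.out) = o := by
      rw [mk_pow, mk_out]
    have hsp : (σ ^ kk σ ((σ ^ i) o.out)) o.out = (σ ^ i) o.out := by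
      have := kk_spec σ ((σ ^ i) o.out)
      rwa [hmk] at this
    have hk_lt : kk σ ((σ ^ i) o.out) < per σ o := by
      have := kk_lt_per σ ((σ ^ i) o.out)
      rwa [hmk] at this
    exact pow_out_inj σ o hk_lt hi hsp
  · intro y hy
    simp only [mem_filter, mem_univ, true_and] at hy
    have := kk_spec σ y
    rwa [hy] at this
  · intro y hy
    rfl

end RankSetup

section GG

variable {a : ℕ} [NeZero a] (f : Fin n → ZMod a) (σ : Perm (Fin n))

/-- partial decoration sum along the cycle from the representative to `x` -/
noncomputable def gg (x : Fin n) : ZMod a :=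
  ∑ i ∈ range (kk σ x), f ((σ ^ i) (Quotient.mk (sc σ) x).out)

lemma kk_out (o : Quotient (sc σ)) : kk σ o.out = 0 := by
  unfold kk
  rw [Nat.find_eq_zero]
  rw [mk_out]
  simp

lemma gg_out (o : Quotient (sc σ)) : gg f σ o.out = 0 := by
  unfold gg
  rw [kk_out]
  simp

lemma gg_succ {x : Fin n} (h : orbSum f σ (Quotient.mk (sc σ) x) = 0) :
    gg f σ (σ x) = gg f σ x + f x := by
  have hmkσ : Quotient.mk (sc σ) (σ x) = Quotient.mk (sc σ) x := mk_apply x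
  have houtσ : (Quotient.mk (sc σ) (σ x)).out = (Quotient.mk (sc σ) x).out := by rw [hmkσ]
  have hsp1 : (σ ^ (kk σ x + 1)) (Quotient.mk (sc σ) x).out = σ x := by
    rw [pow_succ', Perm.mul_apply, kk_spec σ x]
  have hm_le : kk σ (σ x) ≤ kk σ x + 1 :=
    Nat.find_le (by rw [houtσ]; exact hsp1)
  have hm_spec : (σ ^ kk σ (σ x)) (Quotient.mk (sc σ) x).out = σ x := by
    have := kk_spec σ (σ x); rwa [houtσ] at this
  rcases Nat.eq_zero_or_eq_succ_pred (kk σ (σ x)) with hm0 | hms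
  · -- wrap-around case
    have hfix : σ x = (Quotient.mk (sc σ) x).out := by
      rw [← hm_spec, hm0]; simp
    have hple : per σ (Quotient.mk (sc σ) x) ≤ kk σ x + 1 :=
      Nat.find_le ⟨Nat.succ_pos _, by rw [hsp1, hfix]⟩
    have hpgt : kk σ x < per σ (Quotient.mk (sc σ) x) := kk_lt_per σ x
    have hper : per σ (Quotient.mk (sc σ) x) = kk σ x + 1 := by omega
    have hsum : gg f σ x + f x = orbSum f σ (Quotient.mk (sc σ) x) := by
      rw [← sum_per_eq_orbSum σ f, hper, Finset.sum_range_succ]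
      unfold gg
      rw [kk_spec σ x]
    have hgg0 : gg f σ (σ x) = 0 := by
      unfold gg
      rw [hm0]
      simp
    rw [hgg0, hsum, h]
  · -- generic case
    have hm1 : (σ ^ (kk σ (σ x) - 1)) (Quotient.mk (sc σ) x).out = x := by
      apply σ.injective
      rw [← Perm.mul_apply, ← pow_succ']
      rw [show kk σ (σ x) - 1 + 1 = kk σ (σ x) by omega]
      exact hm_spec
    have hge : kk σ x ≤ kk σ (σ x) - 1 := by
      by_contra hcon
      push_neg at hcon
      exact kk_min σ hcon hm1
    have hm : kk σ (σ x) = kk σ x + 1 := by omega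
    unfold gg
    rw [houtσ, hm, Finset.sum_range_succ, kk_spec σ x]


end GG

section Kernel

variable {a : ℕ} [NeZero a] (f : Fin n → ZMod a) (σ : Perm (Fin n))

omit [NeZero a] in
lemma perm_apply_inv_self (σ : Perm (Fin n)) (x : Fin n) : σ (σ⁻¹ x) = x :=
  σ.apply_symm_apply x

lemma mulVec_gmat (v : Fin n → ℂ) (x : Fin n) :
    (gmat a n f σ).mulVec v (σ x) = zu a (f x) * v x := by
  simp only [gmat, Matrix.mulVec, dotProduct]
  rw [Finset.sum_eq_single x]
  · rw [if_pos rfl]; rfl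
  · intro b _ hb
    rw [if_neg (fun hc => hb (σ.injective hc)), zero_mul]
  · intro hx; exact absurd (Finset.mem_univ x) hx

lemma mem_ker_iff (v : Fin n → ℂ) :
    v ∈ LinearMap.ker (gmat a n f σ - 1).mulVecLin ↔
      ∀ x, v (σ x) = zu a (f x) * v x := by
  rw [LinearMap.mem_ker, Matrix.mulVecLin_apply, Matrix.sub_mulVec, Matrix.one_mulVec,
    sub_eq_zero]
  constructor
  · intro h x
    rw [← congrFun h (σ x), mulVec_gmat]
  · intro h
    funext i
    have := h (σ⁻¹ i)
    rw [perm_apply_inv_self] at this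
    rw [← perm_apply_inv_self σ i, mulVec_gmat, ← this, perm_apply_inv_self]

variable {f σ} {v : Fin n → ℂ} (hv : ∀ x, v (σ x) = zu a (f x) * v x)

include hv in
lemma v_pow (o : Quotient (sc σ)) (m : ℕ) :
    v ((σ ^ m) o.out) = zu a (∑ i ∈ range m, f ((σ ^ i) o.out)) * v o.out := by
  induction m with
  | zero => simp [zu_zero]
  | succ m ih =>
      rw [pow_succ', Perm.mul_apply, hv, ih, Finset.sum_range_succ, add_comm, zu_add]
      ring

include hv in
lemma v_eq (x : Fin n) :
    v x = zu a (gg f σ x) * v (Quotient.mk (sc σ) x).out := by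
  have := v_pow hv (Quotient.mk (sc σ) x) (kk σ x)
  rwa [kk_spec σ x] at this

include hv in
lemma v_out_zero {o : Quotient (sc σ)} (h : orbSum f σ o ≠ 0) : v o.out = 0 := by
  have h1 := v_pow hv o (per σ o)
  rw [per_spec, sum_per_eq_orbSum] at h1
  have h2 : (zu a (orbSum f σ o) - 1) * v o.out = 0 := by
    rw [sub_mul, one_mul, ← h1, sub_self]
  rcases mul_eq_zero.mp h2 with h3 | h3
  · exfalso
    exact h ((zu_eq_one_iff a _).mp (by linear_combination h3))
  · exact h3

end Kernel

section Equivalence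

variable (a : ℕ) [NeZero a] (f : Fin n → ZMod a) (σ : Perm (Fin n))

/-- the zero-decoration-sum orbits -/
abbrev ZOrb := {o : Quotient (sc σ) // orbSum f σ o = 0}

noncomputable def Phi : (ZOrb a f σ → ℂ) →ₗ[ℂ] (Fin n → ℂ) where
  toFun c x :=
    if h : orbSum f σ (Quotient.mk (sc σ) x) = 0 then
      zu a (gg f σ x) * c ⟨_, h⟩ else 0
  map_add' c d := by
    funext x
    by_cases h : orbSum f σ (Quotient.mk (sc σ) x) = 0 <;> simp [h] <;> ring
  map_smul' t c := by
    funext x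
    by_cases h : orbSum f σ (Quotient.mk (sc σ) x) = 0 <;> simp [h] <;> ring

noncomputable def Psi : (Fin n → ℂ) →ₗ[ℂ] (ZOrb a f σ → ℂ) where
  toFun v o := v o.1.out
  map_add' v w := rfl
  map_smul' t v := rfl

lemma Phi_mem_ker (c : ZOrb a f σ → ℂ) :
    Phi a f σ c ∈ LinearMap.ker (gmat a n f σ - 1).mulVecLin := by
  rw [mem_ker_iff]
  intro x
  show (if h : _ then _ else _) = zu a (f x) * (if h : _ then _ else _)
  simp only [mk_apply]
  by_cases h : orbSum f σ (Quotient.mk (sc σ) x) = 0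
  · rw [dif_pos h, dif_pos h, gg_succ f σ h, zu_add]
    ring
  · rw [dif_neg h, dif_neg h, mul_zero]

lemma Psi_Phi (c : ZOrb a f σ → ℂ) : Psi a f σ (Phi a f σ c) = c := by
  funext o
  show (if h : _ then _ else _) = c o
  have hcond : orbSum f σ (Quotient.mk (sc σ) o.1.out) = 0 := by
    rw [mk_out]; exact o.2
  rw [dif_pos hcond, gg_out, zu_zero, one_mul]
  congr 1
  apply Subtype.ext
  exact mk_out o.1

lemma Phi_Psi {v : Fin n → ℂ} (hv : v ∈ LinearMap.ker (gmat a n f σ - 1).mulVecLin) :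
    Phi a f σ (Psi a f σ v) = v := by
  rw [mem_ker_iff] at hv
  funext x
  show (if h : _ then _ else _) = v x
  by_cases h : orbSum f σ (Quotient.mk (sc σ) x) = 0
  · rw [dif_pos h]
    exact (v_eq hv x).symm
  · rw [dif_neg h, v_eq hv x, v_out_zero hv h, mul_zero]

noncomputable def kerEquiv :
    LinearMap.ker (gmat a n f σ - 1).mulVecLin ≃ₗ[ℂ] (ZOrb a f σ → ℂ) :=
  LinearEquiv.ofLinear
    ((Psi a f σ).comp (LinearMap.ker (gmat a n f σ - 1).mulVecLin).subtype)
    (LinearMap.codRestrict _ (Phi a f σ) (Phi_mem_ker a f σ))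
    (by apply LinearMap.ext; intro c; exact Psi_Phi a f σ c)
    (by
      apply LinearMap.ext
      rintro ⟨v, hv⟩
      apply Subtype.ext
      exact Phi_Psi a f σ hv)

theorem rank_gmat : (gmat a n f σ - 1).rank = n - zc f σ ∧ zc f σ ≤ n := by
  have hzc : zc f σ ≤ n := by
    calc zc f σ ≤ Fintype.card (Quotient (sc σ)) := by
          apply le_trans (Finset.card_filter_le _ _)
          simp
      _ ≤ Fintype.card (Fin n) :=
          Fintype.card_le_of_surjective (Quotient.mk (sc σ)) (fun o => ⟨o.out, mk_out o⟩)
      _ = n := Fintype.card_fin n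
  refine ⟨?_, hzc⟩
  have hker : Module.finrank ℂ
      (LinearMap.ker (gmat a n f σ - 1).mulVecLin) = zc f σ := by
    rw [(kerEquiv a f σ).finrank_eq]
    rw [Module.finrank_fintype_fun_eq_card]
    rw [Fintype.card_subtype]
    rfl
  have hrn := LinearMap.finrank_range_add_finrank_ker (gmat a n f σ - 1).mulVecLin
  rw [hker, Module.finrank_fintype_fun_eq_card, Fintype.card_fin] at hrn
  have : (gmat a n f σ - 1).rank = Module.finrank ℂ
      (LinearMap.range (gmat a n f σ - 1).mulVecLin) := rfl
  omega

end Equivalence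



section Counting

variable {n : ℕ} {a : ℕ} [NeZero a]

lemma orbSum_sub (f g : Fin n → ZMod a) (σ : Perm (Fin n)) (o : Quotient (sc σ)) :
    orbSum (f - g) σ o = orbSum f σ o - orbSum g σ o := by
  unfold orbSum
  rw [← Finset.sum_sub_distrib]
  rfl

lemma orbSum_add (f g : Fin n → ZMod a) (σ : Perm (Fin n)) (o : Quotient (sc σ)) :
    orbSum (f + g) σ o = orbSum f σ o + orbSum g σ o := by
  unfold orbSum
  rw [← Finset.sum_add_distrib]
  rfl

/-- a section of the orbit-sum map -/
noncomputable def sect (σ : Perm (Fin n)) (s : Quotient (sc σ) → ZMod a) : Fin n → ZMod a :=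
  fun x => if x = (Quotient.mk (sc σ) x).out then s (Quotient.mk (sc σ) x) else 0

lemma orbSum_sect (σ : Perm (Fin n)) (s : Quotient (sc σ) → ZMod a) (o : Quotient (sc σ)) :
    orbSum (sect σ s) σ o = s o := by
  unfold orbSum
  rw [Finset.sum_eq_single o.out]
  · unfold sect
    rw [mk_out]
    simp
  · intro x hx hne
    simp only [mem_filter, mem_univ, true_and] at hx
    unfold sect
    rw [hx]
    exact if_neg hne
  · intro h
    exfalso
    apply h
    simp only [mem_filter, mem_univ, true_and]
    exact mk_out o

lemma card_fiber_eq (σ : Perm (Fin n)) (s : Quotient (sc σ) → ZMod a) :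
    (univ.filter fun f : Fin n → ZMod a => (fun o => orbSum f σ o) = s).card
      = (univ.filter fun f : Fin n → ZMod a =>
          (fun o => orbSum f σ o) = (0 : Quotient (sc σ) → ZMod a)).card := by
  classical
  apply Finset.card_bij' (i := fun f _ => f - sect σ s) (j := fun g _ => g + sect σ s)
  · intro f hf
    simp only [mem_filter, mem_univ, true_and] at hf ⊢
    funext o
    rw [orbSum_sub, orbSum_sect, congrFun hf o]
    simp
  · intro g hg
    simp only [mem_filter, mem_univ, true_and] at hg ⊢
    funext o
    rw [orbSum_add, orbSum_sect, congrFun hg o]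
    simp
  · intro f _; simp
  · intro g _; simp

lemma count_f (σ : Perm (Fin n)) (m : ℕ) :
    (univ.filter fun f : Fin n → ZMod a => zc f σ = m).card
      = (Fintype.card (Quotient (sc σ))).choose m
        * (a - 1) ^ (Fintype.card (Quotient (sc σ)) - m)
        * a ^ (n - Fintype.card (Quotient (sc σ))) := by
  classical
  set cO := Fintype.card (Quotient (sc σ)) with hcO
  set K := (univ.filter fun f : Fin n → ZMod a =>
      (fun o => orbSum f σ o) = (0 : Quotient (sc σ) → ZMod a)).card with hK
  have hcO_le : cO ≤ n := by
    calc cO ≤ Fintype.card (Fin n) :=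
          Fintype.card_le_of_surjective (Quotient.mk (sc σ)) (fun o => ⟨o.out, mk_out o⟩)
      _ = n := Fintype.card_fin n
  have hA : a ^ n = a ^ cO * K := by
    have h1 : (univ : Finset (Fin n → ZMod a)).card
        = ∑ s ∈ (univ : Finset (Quotient (sc σ) → ZMod a)),
            ((univ : Finset (Fin n → ZMod a)).filter
              fun f => (fun o => orbSum f σ o) = s).card :=
      Finset.card_eq_sum_card_fiberwise (fun f _ => mem_univ _)
    rw [Finset.sum_congr rfl (fun s _ => card_fiber_eq σ s), Finset.sum_const,
      smul_eq_mul] at h1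
    rw [card_univ, Fintype.card_fun, ZMod.card, Fintype.card_fin] at h1
    rw [card_univ, Fintype.card_fun, ZMod.card] at h1
    exact h1
  have hKval : K = a ^ (n - cO) := by
    have hpow : a ^ cO * a ^ (n - cO) = a ^ n := by
      rw [← pow_add]
      congr 1
      omega
    have hane : a ^ cO ≠ 0 := pow_ne_zero _ (NeZero.ne a)
    apply Nat.eq_of_mul_eq_mul_left (Nat.pos_of_ne_zero hane)
    rw [← hA, ← hpow]
  have hB : (univ.filter fun f : Fin n → ZMod a => zc f σ = m).card
      = (univ.filter fun s : Quotient (sc σ) → ZMod a =>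
          (univ.filter fun o => s o = 0).card = m).card * K := by
    rw [Finset.card_eq_sum_card_fiberwise
      (f := fun f : Fin n → ZMod a => (fun o => orbSum f σ o))
      (t := univ.filter fun s : Quotient (sc σ) → ZMod a =>
          (univ.filter fun o => s o = 0).card = m)
      (by
        intro f hf
        simp only [Finset.mem_coe, mem_filter, mem_univ, true_and] at hf ⊢
        exact hf)]
    rw [Finset.sum_congr rfl (fun s hs => ?_), Finset.sum_const, smul_eq_mul]
    simp only [mem_filter, mem_univ, true_and] at hs
    rw [Finset.filter_filter]
    have hset : (univ.filter fun f : Fin n → ZMod a =>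
          zc f σ = m ∧ (fun o => orbSum f σ o) = s)
        = univ.filter fun f : Fin n → ZMod a => (fun o => orbSum f σ o) = s := by
      apply Finset.filter_congr
      intro f _
      constructor
      · exact fun h => h.2
      · intro h
        refine ⟨?_, h⟩
        unfold zc
        calc (univ.filter fun o => orbSum f σ o = 0).card
            = (univ.filter fun o => s o = 0).card := by
              congr 1
              apply Finset.filter_congr
              intro o _
              rw [congrFun h o]
          _ = m := hs
    rw [hset]
    exact card_fiber_eq σ s
  rw [hB, count_exact_zeros a m, hKval]

end Counting


lemma gmat_inj {a n : ℕ} [NeZero a] {f f' : Fin n → ZMod a} {σ σ' : Equiv.Perm (Fin n)}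
    (h : gmat a n f σ = gmat a n f' σ') : f = f' ∧ σ = σ' := by
  have hσ : σ = σ' := by
    apply Equiv.ext
    intro j
    by_contra hne
    have h1 : gmat a n f' σ' (σ j) j = 0 := by
      unfold gmat
      exact if_neg (fun hc => hne hc.symm)
    have h2 : gmat a n f σ (σ j) j = zu a (f j) := by
      unfold gmat
      rw [if_pos rfl]
      rfl
    rw [h, h1] at h2
    exact zu_ne_zero a (f j) h2.symm
  subst hσ
  refine ⟨funext fun j => ?_, rfl⟩
  have h2 : gmat a n f σ (σ j) j = gmat a n f' σ (σ j) j := by rw [h]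
  unfold gmat at h2
  rw [if_pos rfl, if_pos rfl] at h2
  exact zu_inj a h2

/-- In `G = G(a,1,n)` (the group of `n×n` monomial matrices whose nonzero entries are
`a`-th roots of unity), the number of elements `g` with `dim im(g − 1) = r` equals
`∑_{j=0}^{r} C(n−r+j, j)·a^{r−j}·(a−1)^j·c(n, n−r+j)`. -/
theorem stmt3 (a n r : ℕ) [NeZero a] (ha : 1 < a) (hr : r ≤ n) :
    Nat.card {M : Matrix (Fin n) (Fin n) ℂ //
        (∃ f σ, M = gmat a n f σ) ∧ (M - 1).rank = r}
      = ∑ j ∈ Finset.range (r + 1),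
          (n - r + j).choose j * a ^ (r - j) * (a - 1) ^ j * stirC n (n - r + j) := by
  classical
  -- Step 1: transfer to counting pairs (f, σ)
  have key : Nat.card {M : Matrix (Fin n) (Fin n) ℂ //
      (∃ f σ, M = gmat a n f σ) ∧ (M - 1).rank = r}
      = Nat.card {p : (Fin n → ZMod a) × Equiv.Perm (Fin n) // zc p.1 p.2 = n - r} := by
    apply (Nat.card_congr _).symm
    apply Equiv.ofBijective (f := fun p : {p : (Fin n → ZMod a) × Equiv.Perm (Fin n) //
        zc p.1 p.2 = n - r} =>
      (⟨gmat a n p.1.1 p.1.2, ⟨p.1.1, p.1.2, rfl⟩, by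
        have hrk := rank_gmat a p.1.1 p.1.2
        have hp := p.2
        omega⟩ : {M : Matrix (Fin n) (Fin n) ℂ //
          (∃ f σ, M = gmat a n f σ) ∧ (M - 1).rank = r}))
    constructor
    · rintro ⟨⟨f₁, σ₁⟩, h₁⟩ ⟨⟨f₂, σ₂⟩, h₂⟩ he
      have := gmat_inj (congrArg Subtype.val he)
      apply Subtype.ext
      simp only [Prod.mk.injEq]
      exact this
    · rintro ⟨M, ⟨f, σ, rfl⟩, hrank⟩
      refine ⟨⟨(f, σ), ?_⟩, rfl⟩
      have hrk := rank_gmat a f σ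
      show zc f σ = n - r
      omega
  rw [key, Nat.card_eq_fintype_card]
  -- Step 2: decompose as a sigma type over σ
  have e2 : {p : (Fin n → ZMod a) × Equiv.Perm (Fin n) // zc p.1 p.2 = n - r}
      ≃ (Σ σ : Equiv.Perm (Fin n), {f : Fin n → ZMod a // zc f σ = n - r}) :=
    { toFun := fun p => ⟨p.1.2, p.1.1, p.2⟩
      invFun := fun q => ⟨(q.2.1, q.1), q.2.2⟩
      left_inv := fun p => rfl
      right_inv := fun q => rfl }
  rw [Fintype.card_congr e2, Fintype.card_sigma]
  -- Step 3: count fibers over σ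
  have hterm : ∀ σ : Equiv.Perm (Fin n),
      Fintype.card {f : Fin n → ZMod a // zc f σ = n - r}
        = (cyclesCount σ).choose (n - r) * (a - 1) ^ (cyclesCount σ - (n - r))
            * a ^ (n - cyclesCount σ) := by
    intro σ
    rw [Fintype.card_subtype, count_f σ (n - r)]
    have hcc : Fintype.card (Quotient (sc σ)) = cyclesCount σ := card_orb σ
    rw [hcc]
  rw [Finset.sum_congr rfl (fun σ _ => hterm σ)]
  -- Step 4: group permutations by cycle count
  have hcc_le : ∀ σ : Equiv.Perm (Fin n), cyclesCount σ ≤ n := by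
    intro σ
    have h1 : Fintype.card (Quotient (sc σ)) = cyclesCount σ := card_orb σ
    have h2 : Fintype.card (Quotient (sc σ)) ≤ Fintype.card (Fin n) :=
      Fintype.card_le_of_surjective (Quotient.mk (sc σ)) (fun o => ⟨o.out, mk_out o⟩)
    rw [Fintype.card_fin] at h2
    omega
  rw [← Finset.sum_fiberwise_of_maps_to
    (g := fun σ : Equiv.Perm (Fin n) => cyclesCount σ) (t := Finset.range (n + 1))
    (fun σ _ => Finset.mem_range.mpr (Nat.lt_succ_of_le (hcc_le σ)))]
  have hstep : ∀ k ∈ Finset.range (n + 1),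
      (∑ σ ∈ Finset.univ.filter fun σ : Equiv.Perm (Fin n) => cyclesCount σ = k,
        (cyclesCount σ).choose (n - r) * (a - 1) ^ (cyclesCount σ - (n - r))
          * a ^ (n - cyclesCount σ))
      = stirC n k * (k.choose (n - r) * (a - 1) ^ (k - (n - r)) * a ^ (n - k)) := by
    intro k _
    rw [Finset.sum_congr rfl (fun σ hσ => by
      rw [(Finset.mem_filter.mp hσ).2]), Finset.sum_const, smul_eq_mul]
    rfl
  rw [Finset.sum_congr rfl hstep]
  -- Step 5: reindex the sum
  rw [show n + 1 = (n - r) + (r + 1) by omega, Finset.sum_range_add]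
  have hzero : ∑ k ∈ Finset.range (n - r),
      stirC n k * (k.choose (n - r) * (a - 1) ^ (k - (n - r)) * a ^ (n - k)) = 0 := by
    apply Finset.sum_eq_zero
    intro k hk
    rw [Finset.mem_range] at hk
    rw [Nat.choose_eq_zero_of_lt hk]
    ring
  rw [hzero, zero_add]
  apply Finset.sum_congr rfl
  intro j hj
  rw [Finset.mem_range] at hj
  have h1 : n - r + j - (n - r) = j := by omega
  have h2 : n - (n - r + j) = r - j := by omega
  have h3 : (n - r + j).choose (n - r) = (n - r + j).choose j := by
    have := Nat.choose_symm (show n - r ≤ n - r + j by omega) (n := n - r + j)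
    rw [show n - r + j - (n - r) = j by omega] at this
    exact this.symm
  rw [h1, h2, h3]
  ring
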